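/- Over all hyperbinary expansions of n, the digit sum ω is maximized exactly at the unique expansion with no 0 digits and minimized exactly at the binary expansion of n; moreover any expansion v of digit sum ω(v) can be reduced to the binary expansion by exactly ω(v) − ω(binary expansion of n) rewriting steps. -/

import Mathlib

/-- The integer represented by a word of digits (most significant first). -/
def hval (w : List ℕ) : ℕ := w.foldl (fun a d => 2 * a + d) 0

/-- `w` is a hyperbinary expansion of `n`: digits in {0,1,2}, nonzero leading
digit, representing `n`.  (The empty word is the unique expansion of `0`.) -/
def IsHyp (n : ℕ) (w : List ℕ) : Prop :=
  (∀ d ∈ w, d ≤ 2) ∧ w.head? ≠ some 0 ∧ hval w = n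

/-- `b n`: the number of hyperbinary expansions of `n` (so `b 0 = 1`). -/
noncomputable def hb (n : ℕ) : ℕ := Set.ncard {w : List ℕ | IsHyp n w}

/-- A single rewriting step: `02 → 10` or `12 → 20`, a leading `2` treated as `02`. -/
def Step (u v : List ℕ) : Prop :=
  (∃ x y : List ℕ, u = x ++ [0, 2] ++ y ∧ v = x ++ [1, 0] ++ y) ∨
  (∃ x y : List ℕ, u = x ++ [1, 2] ++ y ∧ v = x ++ [2, 0] ++ y) ∨
  (∃ y : List ℕ, u = 2 :: y ∧ v = 1 :: 0 :: y)

/-- Strict shortlex order: first by length, then lexicographically. -/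
def Shortlex (u v : List ℕ) : Prop :=
  u.length < v.length ∨ (u.length = v.length ∧ List.Lex (· < ·) u v)

/-- Number of maximal blocks of consecutive `2`'s in a word. -/
def blocks2 : List ℕ → ℕ
  | [] => 0
  | d :: rest => blocks2 rest + (if d = 2 ∧ rest.head? ≠ some 2 then 1 else 0)


lemma foldl_hval (y : List ℕ) : ∀ a : ℕ, y.foldl (fun a d => 2 * a + d) a
    = a * 2 ^ y.length + hval y := by
  induction y with
  | nil => intro a; simp [hval]
  | cons d t ih =>
    intro a
    simp only [List.foldl_cons, List.length_cons]
    rw [ih (2 * a + d), show hval (d :: t) = t.foldl (fun a d => 2*a+d) d by simp [hval], ih d]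
    ring

lemma hval_append (x y : List ℕ) : hval (x ++ y) = hval x * 2 ^ y.length + hval y := by
  simp only [hval, List.foldl_append]
  exact foldl_hval y _

lemma sum_le_hval (w : List ℕ) : w.sum ≤ hval w := by
  induction w with
  | nil => simp [hval]
  | cons d t ih =>
    have : hval (d :: t) = d * 2 ^ t.length + hval t := by
      simp only [hval, List.foldl_cons]; rw [foldl_hval]; simp [hval]
    rw [this, List.sum_cons]
    have : d ≤ d * 2 ^ t.length := Nat.le_mul_of_pos_right d (Nat.pow_pos (by norm_num))
    omega

lemma hval_pos {w : List ℕ} (hne : w ≠ []) (h0 : w.head? ≠ some 0) : 0 < hval w := by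
  cases w with
  | nil => simp at hne
  | cons d t =>
    have hd : d ≠ 0 := by simpa using h0
    have : hval (d :: t) = d * 2 ^ t.length + hval t := by
      simp only [hval, List.foldl_cons]; rw [foldl_hval]; simp [hval]
    rw [this]
    have : 0 < d * 2 ^ t.length := Nat.mul_pos (Nat.pos_of_ne_zero hd) (Nat.pow_pos (by norm_num))
    omega

lemma hval_eq_ofDigits (w : List ℕ) : hval w = Nat.ofDigits 2 w.reverse := by
  induction w using List.reverseRecOn with
  | nil => simp [hval]
  | append_singleton x d ih =>
    rw [hval_append, List.reverse_append]
    have h1 : hval [d] = d := by simp [hval]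
    simp only [List.reverse_cons, List.reverse_nil, List.nil_append, List.singleton_append,
      Nat.ofDigits_cons, ← ih, List.length_singleton, h1, pow_one]
    ring

lemma bin_unique {u v : List ℕ} (hu : ∀ d ∈ u, d < 2) (hu0 : u.head? ≠ some 0)
    (hv : ∀ d ∈ v, d < 2) (hv0 : v.head? ≠ some 0) (h : hval u = hval v) : u = v := by
  have key : ∀ w : List ℕ, (∀ d ∈ w, d < 2) → w.head? ≠ some 0 →
      Nat.digits 2 (hval w) = w.reverse := by
    intro w hw hw0
    rw [hval_eq_ofDigits]
    apply Nat.digits_ofDigits 2 (by norm_num)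
    · intro d hd; exact_mod_cast hw d (List.mem_reverse.mp hd)
    · intro hne
      cases w with
      | nil => simp at hne
      | cons a t =>
        have ha : a ≠ 0 := by simpa using hw0
        simp only [List.reverse_cons]
        rw [List.getLast_append]
        exact ha
  have h1 := key u hu hu0
  have h2 := key v hv hv0
  rw [h] at h1
  exact List.reverse_injective (h1.symm.trans h2)

lemma nozero_unique : ∀ n : ℕ, ∀ u v : List ℕ, (∀ d ∈ u, d = 1 ∨ d = 2) →
    (∀ d ∈ v, d = 1 ∨ d = 2) → hval u = n → hval v = n → u = v := by
  intro n
  induction n using Nat.strong_induction_on with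
  | _ n ih =>
    intro u v hu hv hun hvn
    have hne0 : ∀ w : List ℕ, (∀ d ∈ w, d = 1 ∨ d = 2) → hval w = 0 → w = [] := by
      intro w hw h0
      cases w with
      | nil => rfl
      | cons a t =>
        have : 0 < hval (a :: t) := hval_pos (by simp) (by
          have := hw a (by simp); simp; omega)
        omega
    rcases Nat.eq_zero_or_pos n with rfl | hn
    · rw [hne0 u hu hun, hne0 v hv hvn]
    · -- both nonempty
      have hune : u ≠ [] := by rintro rfl; simp [hval] at hun; omega
      have hvne : v ≠ [] := by rintro rfl; simp [hval] at hvn; omega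
      obtain ⟨u₀, a, rfl⟩ := u.eq_nil_or_concat.resolve_left hune
      obtain ⟨v₀, b, rfl⟩ := v.eq_nil_or_concat.resolve_left hvne
      simp only [List.concat_eq_append] at hu hv hun hvn ⊢
      rw [hval_append] at hun hvn
      have ha : a = 1 ∨ a = 2 := hu a (by simp)
      have hb : b = 1 ∨ b = 2 := hv b (by simp)
      have hva : hval [a] = a := by simp [hval]
      have hvb : hval [b] = b := by simp [hval]
      rw [hva] at hun; rw [hvb] at hvn
      simp only [List.length_singleton, pow_one] at hun hvn
      have hab : a = b ∧ hval u₀ = hval v₀ := by omega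
      have hlt : hval u₀ < n := by omega
      have := ih (hval u₀) hlt u₀ v₀ (fun d hd => hu d (by simp [hd]))
        (fun d hd => hv d (by simp [hd])) rfl hab.2.symm
      rw [this, hab.1]

lemma exists_leftmost {c : ℕ} {w : List ℕ} (h : c ∈ w) :
    ∃ x y : List ℕ, w = x ++ c :: y ∧ c ∉ x := by
  induction w with
  | nil => simp at h
  | cons a t ih =>
    by_cases hac : a = c
    · exact ⟨[], t, by simp [hac], by simp⟩
    · have : c ∈ t := by rcases List.mem_cons.mp h with h | h; · omega
                         · exact h
      obtain ⟨x, y, hxy, hx⟩ := ih this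
      exact ⟨a :: x, y, by simp [hxy], by simp [hx]; omega⟩

lemma hval_mid (x y u v : List ℕ) (h : hval u = hval v) (hl : u.length = v.length) :
    hval (x ++ u ++ y) = hval (x ++ v ++ y) := by
  rw [List.append_assoc, List.append_assoc, hval_append, hval_append,
      hval_append, hval_append, h, List.length_append, List.length_append, hl]

lemma dig_mid {x y : List ℕ} {a b : ℕ} (h1 : ∀ d ∈ x, d ≤ 2) (h2 : ∀ d ∈ y, d ≤ 2)
    (ha : a ≤ 2) (hb : b ≤ 2) : ∀ d ∈ x ++ [a, b] ++ y, d ≤ 2 := by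
  intro d hd
  rcases List.mem_append.mp hd with hd' | hd'
  · rcases List.mem_append.mp hd' with h | h
    · exact h1 d h
    · rcases (by simpa using h : d = a ∨ d = b) with rfl | rfl
      · exact ha
      · exact hb
  · exact h2 d hd'

lemma hval_two_cons (y : List ℕ) : hval (1 :: 0 :: y) = hval (2 :: y) := by
  rw [show (1 : ℕ) :: 0 :: y = [1, 0] ++ y from rfl, show (2 : ℕ) :: y = [2] ++ y from rfl,
    hval_append, hval_append]
  have e1 : hval [1, 0] = 2 := by decide
  have e2 : hval [2] = 2 := by decide
  rw [e1, e2]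

lemma min_step {n : ℕ} {w : List ℕ} (hw : IsHyp n w) (h2 : (2:ℕ) ∈ w) :
    ∃ w', Step w w' ∧ IsHyp n w' ∧ w'.sum + 1 = w.sum := by
  obtain ⟨hdig, hhead, hvalw⟩ := hw
  obtain ⟨x, y, rfl, hx⟩ := exists_leftmost h2
  rcases x.eq_nil_or_concat with rfl | ⟨x₀, p, rfl⟩
  · -- w = 2 :: y
    refine ⟨1 :: 0 :: y, Or.inr (Or.inr ⟨y, by simp, rfl⟩), ⟨?_, by simp, ?_⟩,
      by simp only [List.nil_append, List.sum_cons]; omega⟩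
    · intro d hd
      rcases List.mem_cons.mp hd with rfl | hd
      · omega
      rcases List.mem_cons.mp hd with rfl | hd
      · omega
      · exact hdig d (by simp [hd])
    · rw [← hvalw]; simpa using hval_two_cons y
  · simp only [List.concat_eq_append] at hx hdig hhead hvalw ⊢
    have hp2 : p ≠ 2 := fun h => hx (by simp [h])
    have hple : p ≤ 2 := hdig p (by simp)
    have hw_eq : (x₀ ++ [p]) ++ 2 :: y = x₀ ++ [p, 2] ++ y := by simp
    rw [hw_eq] at hdig hhead hvalw ⊢
    have hdx : ∀ d ∈ x₀, d ≤ 2 := fun d hd => hdig d (by simp [hd])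
    have hdy : ∀ d ∈ y, d ≤ 2 := fun d hd => hdig d (by simp [hd])
    interval_cases p
    · -- p = 0 : 02 → 10
      refine ⟨x₀ ++ [1, 0] ++ y, Or.inl ⟨x₀, y, rfl, rfl⟩,
        ⟨dig_mid hdx hdy (by norm_num) (by norm_num), ?_, ?_⟩, ?_⟩
      · cases x₀ with
        | nil => simp at hhead
        | cons c t => simpa using hhead
      · rw [← hvalw]; exact hval_mid _ _ _ _ (by decide) (by decide)
      · simp [List.sum_append]; omega
    · -- p = 1 : 12 → 20
      refine ⟨x₀ ++ [2, 0] ++ y, Or.inr (Or.inl ⟨x₀, y, rfl, rfl⟩),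
        ⟨dig_mid hdx hdy (by norm_num) (by norm_num), ?_, ?_⟩, ?_⟩
      · cases x₀ with
        | nil => simp
        | cons c t => simpa using hhead
      · rw [← hvalw]; exact hval_mid _ _ _ _ (by decide) (by decide)
      · simp [List.sum_append]; omega
    · exact absurd rfl hp2

lemma max_step {n : ℕ} {w : List ℕ} (hw : IsHyp n w) (h0 : (0:ℕ) ∈ w) :
    ∃ w', IsHyp n w' ∧ w'.sum = w.sum + 1 := by
  obtain ⟨hdig, hhead, hvalw⟩ := hw
  obtain ⟨x, y, rfl, hx⟩ := exists_leftmost h0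
  have hxne : x ≠ [] := by rintro rfl; simp at hhead
  obtain ⟨x₀, p, rfl⟩ := x.eq_nil_or_concat.resolve_left hxne
  simp only [List.concat_eq_append] at hx hdig hhead hvalw ⊢
  have hp0 : p ≠ 0 := fun h => hx (by simp [h])
  have hple : p ≤ 2 := hdig p (by simp)
  have hw_eq : (x₀ ++ [p]) ++ 0 :: y = x₀ ++ [p, 0] ++ y := by simp
  rw [hw_eq] at hdig hhead hvalw ⊢
  have hdx : ∀ d ∈ x₀, d ≤ 2 := fun d hd => hdig d (by simp [hd])
  have hdy : ∀ d ∈ y, d ≤ 2 := fun d hd => hdig d (by simp [hd])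
  interval_cases p
  · exact absurd rfl hp0
  · -- p = 1
    rcases eq_or_ne x₀ [] with rfl | hx₀ne
    · refine ⟨2 :: y, ⟨?_, by simp, ?_⟩,
        by simp only [List.nil_append, List.sum_cons, List.sum_append, List.sum_nil]; omega⟩
      · intro d hd
        rcases List.mem_cons.mp hd with rfl | hd
        · omega
        · exact hdy d hd
      · rw [← hvalw]; simpa using (hval_two_cons y).symm
    · refine ⟨x₀ ++ [0, 2] ++ y,
        ⟨dig_mid hdx hdy (by norm_num) (by norm_num), ?_, ?_⟩, ?_⟩
      · cases x₀ with
        | nil => exact absurd rfl hx₀ne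
        | cons c t => simpa using hhead
      · rw [← hvalw]; exact hval_mid _ _ _ _ (by decide) (by decide)
      · simp [List.sum_append]; omega
  · -- p = 2
    refine ⟨x₀ ++ [1, 2] ++ y,
      ⟨dig_mid hdx hdy (by norm_num) (by norm_num), ?_, ?_⟩, ?_⟩
    · cases x₀ with
      | nil => simp
      | cons c t => simpa using hhead
    · rw [← hvalw]; exact hval_mid _ _ _ _ (by decide) (by decide)
    · simp [List.sum_append]; omega

lemma min_main {n : ℕ} {bin : List ℕ} (hbin : IsHyp n bin) (hbin2 : 2 ∉ bin) :
    ∀ s : ℕ, ∀ w : List ℕ, w.sum = s → IsHyp n w →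
      bin.sum ≤ w.sum ∧ ∃ f : ℕ → List ℕ, f 0 = w ∧ f (w.sum - bin.sum) = bin ∧
        ∀ i < w.sum - bin.sum, Step (f i) (f (i + 1)) := by
  intro s
  induction s using Nat.strong_induction_on with
  | _ s ih =>
    intro w hs hw
    by_cases h2 : (2:ℕ) ∈ w
    · obtain ⟨w', hstep, hw', hsum⟩ := min_step hw h2
      obtain ⟨hle, f', hf0, hfk, hfstep⟩ := ih w'.sum (by omega) w' rfl hw'
      have hk : w.sum - bin.sum = (w'.sum - bin.sum) + 1 := by omega
      refine ⟨by omega, fun i => if i = 0 then w else f' (i - 1), by simp, ?_, ?_⟩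
      · show (if w.sum - bin.sum = 0 then w else f' (w.sum - bin.sum - 1)) = bin
        rw [hk, if_neg (by omega), Nat.add_sub_cancel]; exact hfk
      · intro i hi
        rw [hk] at hi
        match i with
        | 0 =>
          simp only [if_pos rfl, if_neg (by omega : (0:ℕ) + 1 ≠ 0), Nat.add_sub_cancel, hf0]
          exact hstep
        | (j + 1) =>
          simp only [if_neg (by omega : j + 1 ≠ 0), if_neg (by omega : j + 1 + 1 ≠ 0),
            Nat.add_sub_cancel]
          exact hfstep j (by omega)
    · have hwdig : ∀ d ∈ w, d < 2 := fun d hd =>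
        lt_of_le_of_ne (hw.1 d hd) (fun h => h2 (h ▸ hd))
      have hbdig : ∀ d ∈ bin, d < 2 := fun d hd =>
        lt_of_le_of_ne (hbin.1 d hd) (fun h => hbin2 (h ▸ hd))
      have hwb : w = bin := bin_unique hwdig hw.2.1 hbdig hbin.2.1
        (hw.2.2.trans hbin.2.2.symm)
      subst hwb
      exact ⟨le_refl _, fun _ => w, rfl, by simp, fun i hi => absurd hi (by omega)⟩

lemma max_main {n : ℕ} {mhe : List ℕ} (hmhe : IsHyp n mhe) (hmhe0 : 0 ∉ mhe) :
    ∀ k : ℕ, ∀ w : List ℕ, n - w.sum = k → IsHyp n w →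
      w.sum ≤ mhe.sum ∧ (w.sum = mhe.sum → w = mhe) := by
  intro k
  induction k using Nat.strong_induction_on with
  | _ k ih =>
    intro w hk hw
    by_cases h0 : (0:ℕ) ∈ w
    · obtain ⟨w', hw', hsum⟩ := max_step hw h0
      have h1 : w'.sum ≤ n := hw'.2.2 ▸ sum_le_hval w'
      have := ih (n - w'.sum) (by omega) w' rfl hw'
      exact ⟨by omega, fun h => absurd h (by omega)⟩
    · have hwd : ∀ d ∈ w, d = 1 ∨ d = 2 := fun d hd => by
        have h1 := hw.1 d hd
        have h2 : d ≠ 0 := fun h => h0 (h ▸ hd)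
        omega
      have hmd : ∀ d ∈ mhe, d = 1 ∨ d = 2 := fun d hd => by
        have h1 := hmhe.1 d hd
        have h2 : d ≠ 0 := fun h => hmhe0 (h ▸ hd)
        omega
      have hwm : w = mhe := nozero_unique n w mhe hwd hmd hw.2.2 hmhe.2.2
      exact ⟨le_of_eq (by rw [hwm]), fun _ => hwm⟩

theorem stmt17 (n : ℕ) (hn : 0 < n) (bin mhe : List ℕ)
    (hbin : IsHyp n bin) (hbin2 : 2 ∉ bin)
    (hmhe : IsHyp n mhe) (hmhe0 : 0 ∉ mhe) :
    (∀ w : List ℕ, IsHyp n w → bin.sum ≤ w.sum ∧ w.sum ≤ mhe.sum) ∧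
    (∀ w : List ℕ, IsHyp n w → w.sum = mhe.sum → w = mhe) ∧
    (∀ w : List ℕ, IsHyp n w → w.sum = bin.sum → w = bin) ∧
    (∀ w : List ℕ, IsHyp n w → ∃ f : ℕ → List ℕ,
      f 0 = w ∧ f (w.sum - bin.sum) = bin ∧
      ∀ i < w.sum - bin.sum, Step (f i) (f (i + 1))) := by
  refine ⟨?_, ?_, ?_, ?_⟩
  · intro w hw
    exact ⟨(min_main hbin hbin2 w.sum w rfl hw).1, (max_main hmhe hmhe0 _ w rfl hw).1⟩
  · intro w hw heq
    exact (max_main hmhe hmhe0 _ w rfl hw).2 heq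
  · intro w hw heq
    by_cases h2 : (2:ℕ) ∈ w
    · obtain ⟨w', _, hw', hsum⟩ := min_step hw h2
      have := (min_main hbin hbin2 w'.sum w' rfl hw').1
      omega
    · have hwdig : ∀ d ∈ w, d < 2 := fun d hd =>
        lt_of_le_of_ne (hw.1 d hd) (fun h => h2 (h ▸ hd))
      have hbdig : ∀ d ∈ bin, d < 2 := fun d hd =>
        lt_of_le_of_ne (hbin.1 d hd) (fun h => hbin2 (h ▸ hd))
      exact bin_unique hwdig hw.2.1 hbdig hbin.2.1 (hw.2.2.trans hbin.2.2.symm)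
  · intro w hw
    exact (min_main hbin hbin2 w.sum w rfl hw).2
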